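/- Let 𝕜 be a field of characteristic zero and let E be the exterior algebra over 𝕜 on generators e_1,…,e_n. Then in E ⊗_𝕜 E, the product ∏_{i=1}^{n} (1 ⊗ e_i − e_i ⊗ 1) is nonzero; since each factor 1 ⊗ e_i − e_i ⊗ 1 lies in the kernel of the multiplication map μ: E ⊗_𝕜 E → E, the zero-divisor cup length of E is at least n. -/

import Mathlib

open scoped TensorProduct

set_option maxHeartbeats 1000000
set_option synthInstance.maxHeartbeats 400000

/-- The standard grading of the exterior algebra `E` on `e₁, …, eₙ` over `𝕜`
(realized as `ExteriorAlgebra 𝕜 (𝕜^n)`, with `eᵢ = ι (Pi.single i 1)`). -/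
noncomputable abbrev extGrading (𝕜 : Type*) [Field 𝕜] (n : ℕ) :
    ℕ → Submodule 𝕜 (ExteriorAlgebra 𝕜 (Fin n → 𝕜)) :=
  fun i => ⋀[𝕜]^i (Fin n → 𝕜)

/-- The tensor square `E ⊗[𝕜] E` of the exterior algebra, endowed with its graded
(Koszul-signed) multiplication `(a ⊗ b)(a' ⊗ b') = (-1)^{|a'||b|} (aa') ⊗ (bb')`. -/
noncomputable abbrev extTensorSquare (𝕜 : Type*) [Field 𝕜] (n : ℕ) :=
  (extGrading 𝕜 n) ᵍ⊗[𝕜] (extGrading 𝕜 n)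

/-- The `i`-th generator `eᵢ` of the exterior algebra. -/
noncomputable def extGen (𝕜 : Type*) [Field 𝕜] (n : ℕ) (i : Fin n) :
    ExteriorAlgebra 𝕜 (Fin n → 𝕜) :=
  ExteriorAlgebra.ι 𝕜 (Pi.single i 1)

/-- The multiplication map `μ : E ⊗ E → E`, `μ(a ⊗ b) = a b`, as a linear map on the
graded tensor square. -/
noncomputable def extMul (𝕜 : Type*) [Field 𝕜] (n : ℕ) :
    extTensorSquare 𝕜 n →ₗ[𝕜] ExteriorAlgebra 𝕜 (Fin n → 𝕜) :=
  LinearMap.mul' 𝕜 _ ∘ₗ (GradedTensorProduct.of 𝕜 _ _).symm.toLinearMap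

/-- The zero divisor `ēᵢ = 1 ⊗ eᵢ − eᵢ ⊗ 1` in `E ⊗ E`. -/
noncomputable def extZeroDiv (𝕜 : Type*) [Field 𝕜] (n : ℕ) (i : Fin n) :
    extTensorSquare 𝕜 n :=
  GradedTensorProduct.of 𝕜 _ _
    ((1 : ExteriorAlgebra 𝕜 (Fin n → 𝕜)) ⊗ₜ[𝕜] extGen 𝕜 n i - extGen 𝕜 n i ⊗ₜ[𝕜] 1)

/-- The zero-divisor cup length of `E`: the largest `m` for which there exist `m` elements
of the kernel of the multiplication map `μ : E ⊗ E → E` whose product in `E ⊗ E` is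
nonzero. -/
noncomputable def extZcl (𝕜 : Type*) [Field 𝕜] (n : ℕ) : ℕ :=
  sSup {m : ℕ | ∃ l : List (extTensorSquare 𝕜 n), l.length = m ∧
    (∀ x ∈ l, extMul 𝕜 n x = 0) ∧ l.prod ≠ 0}

namespace ZclAux

variable {𝕜 : Type*} [Field 𝕜] {n : ℕ}

local notation "E" => ExteriorAlgebra 𝕜 (Fin n → 𝕜)

lemma counit_ι (v : Fin n → 𝕜) :
    ExteriorAlgebra.algebraMapInv (ExteriorAlgebra.ι 𝕜 v) = 0 := by
  simp [ExteriorAlgebra.algebraMapInv]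

lemma counit_eq_zero {i : ℕ} (hi : i ≠ 0) {a : E}
    (ha : a ∈ extGrading 𝕜 n i) :
    ExteriorAlgebra.algebraMapInv a = 0 := by
  obtain ⟨m, rfl⟩ := Nat.exists_eq_succ_of_ne_zero hi
  rw [extGrading, ExteriorAlgebra.exteriorPower, pow_succ] at ha
  refine Submodule.mul_induction_on ha (fun x _ y hy => ?_)
    (fun x y hx hy => by rw [map_add, hx, hy, add_zero])
  obtain ⟨v, rfl⟩ := hy
  rw [map_mul, counit_ι, mul_zero]

lemma one_ne_zero_E : (1 : E) ≠ 0 := fun h => by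
  simpa using congrArg (ExteriorAlgebra.algebraMapInv (M := Fin n → 𝕜)) h

/-- The sign condition needed for `GradedTensorProduct.lift` with first map the counit. -/
lemma lift_cond {C : Type*} [Ring C] [Algebra 𝕜 C]
    (g : E →ₐ[𝕜] C) :
    ∀ ⦃i j : ℕ⦄ (a : extGrading 𝕜 n i) (b : extGrading 𝕜 n j),
      ((Algebra.ofId 𝕜 C).comp ExteriorAlgebra.algebraMapInv)
          (a : ExteriorAlgebra 𝕜 (Fin n → 𝕜)) * g (b : ExteriorAlgebra 𝕜 (Fin n → 𝕜)) =
        (-1 : ℤˣ) ^ (j * i) • (g (b : ExteriorAlgebra 𝕜 (Fin n → 𝕜)) *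
          ((Algebra.ofId 𝕜 C).comp ExteriorAlgebra.algebraMapInv)
            (a : ExteriorAlgebra 𝕜 (Fin n → 𝕜))) := by
  intro i j a b
  rcases eq_or_ne i 0 with rfl | hi
  · rw [mul_zero, pow_zero, one_smul]
    simp only [AlgHom.comp_apply, Algebra.ofId_apply]
    exact Algebra.commutes _ _
  · rw [AlgHom.comp_apply, counit_eq_zero hi a.2, map_zero, zero_mul, mul_zero, smul_zero]

/-- The algebra map `E ᵍ⊗ E →ₐ E`, `a ⊗ b ↦ ε(a) b`. -/
noncomputable def extH : extTensorSquare 𝕜 n →ₐ[𝕜] E :=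
  GradedTensorProduct.lift _ _
    ((Algebra.ofId 𝕜 E).comp ExteriorAlgebra.algebraMapInv) (AlgHom.id 𝕜 E)
    (lift_cond _)

lemma extH_zeroDiv (i : Fin n) : extH (extZeroDiv 𝕜 n i) = extGen 𝕜 n i := by
  have h : extZeroDiv 𝕜 n i =
      (1 : E) ᵍ⊗ₜ[𝕜] extGen 𝕜 n i - extGen 𝕜 n i ᵍ⊗ₜ[𝕜] (1 : E) := by
    rw [extZeroDiv, map_sub]
  rw [h, map_sub, extH, GradedTensorProduct.lift_tmul, GradedTensorProduct.lift_tmul]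
  simp [extGen, counit_ι, Algebra.ofId_apply]

lemma extH_prod :
    extH (List.ofFn fun i : Fin n => extZeroDiv 𝕜 n i).prod =
      ExteriorAlgebra.ιMulti 𝕜 n (fun i : Fin n => Pi.single i 1) := by
  rw [map_list_prod, List.map_ofFn]
  have h : (⇑extH ∘ fun i : Fin n => extZeroDiv 𝕜 n i) =
      fun i : Fin n => ExteriorAlgebra.ι 𝕜 (Pi.single i 1) :=
    funext fun i => by simp only [Function.comp_apply, extH_zeroDiv, extGen]
  rw [h, ExteriorAlgebra.ιMulti_apply]

lemma prod_ne_zero :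
    (List.ofFn fun i : Fin n => extZeroDiv 𝕜 n i).prod ≠ 0 := by
  intro h0
  have h1 : ExteriorAlgebra.ιMulti 𝕜 n (fun i : Fin n => Pi.single i (1:𝕜)) = 0 := by
    rw [← extH_prod, h0, map_zero]
  have h2 := congrArg (ExteriorAlgebra.liftAlternating
    (Function.update (fun _ => 0) n (Matrix.detRowAlternating : (Fin n → 𝕜) [⋀^Fin n]→ₗ[𝕜] 𝕜))) h1
  rw [ExteriorAlgebra.liftAlternating_apply_ιMulti, map_zero, Function.update_self] at h2
  have h3 : (Matrix.of fun i : Fin n => Pi.single i (1:𝕜)) = (1 : Matrix (Fin n) (Fin n) 𝕜) := by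
    ext i j
    simp [Matrix.one_apply, Pi.single_apply, eq_comm]
  have h4 : (Matrix.of fun i : Fin n => Pi.single i (1:𝕜)).det = 0 := h2
  rw [h3, Matrix.det_one] at h4
  exact one_ne_zero h4

/-! ### The filtration by total degree -/

/-- Submodule of the graded tensor square spanned by homogeneous tensors of total degree ≥ k. -/
noncomputable def W (𝕜 : Type*) [Field 𝕜] (n k : ℕ) : Submodule 𝕜 (extTensorSquare 𝕜 n) :=
  Submodule.span 𝕜 {z | ∃ (i j : ℕ) (a b : ExteriorAlgebra 𝕜 (Fin n → 𝕜)),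
    k ≤ i + j ∧ a ∈ extGrading 𝕜 n i ∧ b ∈ extGrading 𝕜 n j ∧ z = a ᵍ⊗ₜ[𝕜] b}

lemma W_antitone {k l : ℕ} (h : k ≤ l) : W 𝕜 n l ≤ W 𝕜 n k := by
  apply Submodule.span_mono
  rintro z ⟨i, j, a, b, hk, ha, hb, rfl⟩
  exact ⟨i, j, a, b, h.trans hk, ha, hb, rfl⟩

lemma unit_smul_mem {M : Type*} [AddCommGroup M] [Module 𝕜 M] (p : Submodule 𝕜 M)
    (u : ℤˣ) {x : M} (hx : x ∈ p) : u • x ∈ p := by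
  rcases Int.units_eq_one_or u with rfl | rfl
  · simpa using hx
  · simpa [Units.smul_def] using p.neg_mem hx

lemma W_gen_mul {k l : ℕ} {i j : ℕ} {a b : ExteriorAlgebra 𝕜 (Fin n → 𝕜)}
    (hk : k ≤ i + j) (ha : a ∈ extGrading 𝕜 n i) (hb : b ∈ extGrading 𝕜 n j)
    {y : extTensorSquare 𝕜 n} (hy : y ∈ W 𝕜 n l) :
    (a ᵍ⊗ₜ[𝕜] b) * y ∈ W 𝕜 n (k + l) := by
  induction hy using Submodule.span_induction with
  | mem y hyg =>
    obtain ⟨i', j', a', b', hl, ha', hb', rfl⟩ := hyg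
    have heq : (a ᵍ⊗ₜ[𝕜] b) * (a' ᵍ⊗ₜ[𝕜] b') =
        (-1 : ℤˣ) ^ (j * i') • ((a * a') ᵍ⊗ₜ[𝕜] (b * b')) :=
      GradedTensorProduct.tmul_coe_mul_coe_tmul (extGrading 𝕜 n) (extGrading 𝕜 n)
        a ⟨b, hb⟩ ⟨a', ha'⟩ b'
    rw [heq]
    refine unit_smul_mem _ _ (Submodule.subset_span ?_)
    exact ⟨i + i', j + j', a * a', b * b', by omega,
      SetLike.mul_mem_graded ha ha', SetLike.mul_mem_graded hb hb', rfl⟩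
  | zero => simpa using (W 𝕜 n (k + l)).zero_mem
  | add y₁ y₂ _ _ h1 h2 => simpa [mul_add] using (W 𝕜 n (k + l)).add_mem h1 h2
  | smul c y _ h => simpa [mul_smul_comm] using (W 𝕜 n (k + l)).smul_mem c h

lemma W_mul {k l : ℕ} {x y : extTensorSquare 𝕜 n}
    (hx : x ∈ W 𝕜 n k) (hy : y ∈ W 𝕜 n l) : x * y ∈ W 𝕜 n (k + l) := by
  induction hx using Submodule.span_induction with
  | mem x hxg =>
    obtain ⟨i, j, a, b, hk, ha, hb, rfl⟩ := hxg
    exact W_gen_mul hk ha hb hy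
  | zero => simpa using (W 𝕜 n (k + l)).zero_mem
  | add x₁ x₂ _ _ h1 h2 => simpa [add_mul] using (W 𝕜 n (k + l)).add_mem h1 h2
  | smul c x _ h => simpa [smul_mul_assoc] using (W 𝕜 n (k + l)).smul_mem c h

lemma one_mem_W0 : (1 : extTensorSquare 𝕜 n) ∈ W 𝕜 n 0 := by
  refine Submodule.subset_span ⟨0, 0, 1, 1, le_rfl,
    SetLike.one_mem_graded _, SetLike.one_mem_graded _, ?_⟩
  have h1 : (1 : ExteriorAlgebra 𝕜 (Fin n → 𝕜)) ᵍ⊗ₜ[𝕜] (1 : ExteriorAlgebra 𝕜 (Fin n → 𝕜)) =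
      (1 : extTensorSquare 𝕜 n) := by
    rw [GradedTensorProduct.tmul, ← Algebra.TensorProduct.one_def]
    exact GradedTensorProduct.of_one _ _
  exact h1.symm

lemma list_prod_mem_W (l : List (extTensorSquare 𝕜 n)) (h : ∀ x ∈ l, x ∈ W 𝕜 n 1) :
    l.prod ∈ W 𝕜 n l.length := by
  induction l with
  | nil => simpa using one_mem_W0
  | cons x t ih =>
    rw [List.prod_cons, List.length_cons]
    have := W_mul (h x List.mem_cons_self) (ih fun y hy => h y (List.mem_cons_of_mem _ hy))
    simpa [Nat.add_comm] using this

lemma power_eq_bot {i : ℕ} (hi : n < i) : extGrading 𝕜 n i = ⊥ := by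
  rw [extGrading, ← ExteriorAlgebra.ιMulti_span_fixedDegree, Submodule.span_eq_bot]
  rintro _ ⟨v, rfl⟩
  refine AlternatingMap.map_linearDependent _ v fun hli => ?_
  have h1 := hli.fintype_card_le_finrank
  rw [Module.finrank_fin_fun, Fintype.card_fin] at h1
  omega

lemma W_top : W 𝕜 n (2 * n + 1) = ⊥ := by
  rw [W, Submodule.span_eq_bot]
  rintro z ⟨i, j, a, b, hk, ha, hb, rfl⟩
  have : n < i ∨ n < j := by omega
  rcases this with h | h
  · rw [power_eq_bot h] at ha
    rw [Submodule.mem_bot] at ha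
    subst ha
    rw [GradedTensorProduct.tmul, TensorProduct.zero_tmul, map_zero]
  · rw [power_eq_bot h] at hb
    rw [Submodule.mem_bot] at hb
    subst hb
    rw [GradedTensorProduct.tmul, TensorProduct.tmul_zero, map_zero]

lemma mem0_exists {z : E} (hz : z ∈ extGrading 𝕜 n 0) :
    ∃ r : 𝕜, algebraMap 𝕜 (ExteriorAlgebra 𝕜 (Fin n → 𝕜)) r = z := by
  rw [extGrading, ExteriorAlgebra.exteriorPower, pow_zero] at hz
  exact Submodule.mem_one.mp hz

lemma mem_span_one_sup_W1 (x : extTensorSquare 𝕜 n) :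
    x ∈ (𝕜 ∙ (1 : extTensorSquare 𝕜 n)) ⊔ W 𝕜 n 1 := by
  classical
  obtain ⟨y, rfl⟩ : ∃ y, GradedTensorProduct.of 𝕜 (extGrading 𝕜 n) (extGrading 𝕜 n) y = x :=
    ⟨(GradedTensorProduct.of 𝕜 _ _).symm x, (GradedTensorProduct.of 𝕜 _ _).apply_symm_apply x⟩
  induction y using TensorProduct.induction_on with
  | zero =>
    rw [map_zero]
    exact Submodule.zero_mem _
  | add y z hy hz =>
    rw [map_add]
    exact Submodule.add_mem _ hy hz
  | tmul a b =>
    rw [← DirectSum.sum_support_decompose (extGrading 𝕜 n) a]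
    rw [← DirectSum.sum_support_decompose (extGrading 𝕜 n) b]
    rw [TensorProduct.sum_tmul]
    simp only [TensorProduct.tmul_sum]
    rw [map_sum]
    refine Submodule.sum_mem _ fun i _ => ?_
    rw [map_sum]
    refine Submodule.sum_mem _ fun j _ => ?_
    rcases eq_or_ne i 0 with rfl | hi
    · rcases eq_or_ne j 0 with rfl | hj
      · obtain ⟨r, hr⟩ := mem0_exists (DirectSum.decompose (extGrading 𝕜 n) a 0).2
        obtain ⟨s, hs⟩ := mem0_exists (DirectSum.decompose (extGrading 𝕜 n) b 0).2
        refine Submodule.mem_sup_left ?_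
        rw [← hr, ← hs]
        have : (algebraMap 𝕜 (ExteriorAlgebra 𝕜 (Fin n → 𝕜)) r) ⊗ₜ[𝕜]
            (algebraMap 𝕜 (ExteriorAlgebra 𝕜 (Fin n → 𝕜)) s) =
            (r * s) • ((1 : ExteriorAlgebra 𝕜 (Fin n → 𝕜)) ⊗ₜ[𝕜]
              (1 : ExteriorAlgebra 𝕜 (Fin n → 𝕜))) := by
          rw [Algebra.algebraMap_eq_smul_one, Algebra.algebraMap_eq_smul_one,
            TensorProduct.smul_tmul_smul]
        rw [this, map_smul]
        refine Submodule.smul_mem _ _ ?_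
        have h1 : GradedTensorProduct.of 𝕜 (extGrading 𝕜 n) (extGrading 𝕜 n)
            ((1 : ExteriorAlgebra 𝕜 (Fin n → 𝕜)) ⊗ₜ[𝕜] (1 : ExteriorAlgebra 𝕜 (Fin n → 𝕜))) =
            (1 : extTensorSquare 𝕜 n) := by
          rw [← Algebra.TensorProduct.one_def]
          exact GradedTensorProduct.of_one _ _
        rw [h1]
        exact Submodule.mem_span_singleton_self _
      · refine Submodule.mem_sup_right (Submodule.subset_span ?_)
        exact ⟨0, j, _, _, by omega, (DirectSum.decompose (extGrading 𝕜 n) a 0).2,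
          (DirectSum.decompose (extGrading 𝕜 n) b j).2, rfl⟩
    · refine Submodule.mem_sup_right (Submodule.subset_span ?_)
      exact ⟨i, j, _, _, by omega, (DirectSum.decompose (extGrading 𝕜 n) a i).2,
        (DirectSum.decompose (extGrading 𝕜 n) b j).2, rfl⟩

lemma extMul_tmul (a b : ExteriorAlgebra 𝕜 (Fin n → 𝕜)) :
    extMul 𝕜 n (a ᵍ⊗ₜ[𝕜] b) = a * b := by
  rw [extMul]
  rfl

lemma extMul_W1 {w : extTensorSquare 𝕜 n} (hw : w ∈ W 𝕜 n 1) :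
    extMul 𝕜 n w ∈ ⨆ (i : ℕ) (_ : i ≠ 0), extGrading 𝕜 n i := by
  induction hw using Submodule.span_induction with
  | mem z hz =>
    obtain ⟨i, j, a, b, hk, ha, hb, rfl⟩ := hz
    rw [extMul_tmul]
    exact le_iSup₂ (f := fun (i : ℕ) (_ : i ≠ 0) => extGrading 𝕜 n i) (i + j)
      (by omega) (SetLike.mul_mem_graded ha hb)
  | zero => simp
  | add y₁ y₂ _ _ h1 h2 => rw [map_add]; exact Submodule.add_mem _ h1 h2
  | smul c y _ h => rw [map_smul]; exact Submodule.smul_mem _ c h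

lemma ker_le_W1 {x : extTensorSquare 𝕜 n} (hx : extMul 𝕜 n x = 0) : x ∈ W 𝕜 n 1 := by
  have h := mem_span_one_sup_W1 x
  rw [Submodule.mem_sup] at h
  obtain ⟨y, hy, w, hw, rfl⟩ := h
  obtain ⟨c, rfl⟩ := Submodule.mem_span_singleton.mp hy
  have h1 : extMul 𝕜 n (1 : extTensorSquare 𝕜 n) = 1 := by
    have : (1 : extTensorSquare 𝕜 n) =
        (1 : ExteriorAlgebra 𝕜 (Fin n → 𝕜)) ᵍ⊗ₜ[𝕜] (1 : ExteriorAlgebra 𝕜 (Fin n → 𝕜)) := rfl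
    rw [this, extMul_tmul, one_mul]
  rw [map_add, map_smul, h1] at hx
  have hμw := extMul_W1 hw
  have hN : c • (1 : ExteriorAlgebra 𝕜 (Fin n → 𝕜)) ∈
      ⨆ (i : ℕ) (_ : i ≠ 0), extGrading 𝕜 n i := by
    have : c • (1 : ExteriorAlgebra 𝕜 (Fin n → 𝕜)) = -(extMul 𝕜 n w) := by
      rw [eq_neg_iff_add_eq_zero]; exact hx
    rw [this]
    exact Submodule.neg_mem _ hμw
  have h0 : c • (1 : ExteriorAlgebra 𝕜 (Fin n → 𝕜)) ∈ extGrading 𝕜 n 0 :=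
    Submodule.smul_mem _ _ (SetLike.one_mem_graded _)
  have hdisj : Disjoint (extGrading 𝕜 n 0) (⨆ (i : ℕ) (_ : i ≠ 0), extGrading 𝕜 n i) := by
    have hint := (DirectSum.Decomposition.isInternal (extGrading 𝕜 n)).submodule_iSupIndep
    exact hint.disjoint_biSup (y := {i : ℕ | i ≠ 0}) (by simp)
  have hzero : c • (1 : ExteriorAlgebra 𝕜 (Fin n → 𝕜)) = 0 :=
    Submodule.disjoint_def.mp hdisj _ h0 hN
  have hc : c = 0 := by
    rcases smul_eq_zero.mp hzero with h | h
    · exact h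
    · exact absurd h one_ne_zero_E
  rw [hc, zero_smul, zero_add]
  exact hw

end ZclAux

theorem exteriorAlgebra_zcl_ge (𝕜 : Type*) [Field 𝕜] [CharZero 𝕜] (n : ℕ) :
    (List.ofFn fun i : Fin n => extZeroDiv 𝕜 n i).prod ≠ 0 ∧
    (∀ i : Fin n, extMul 𝕜 n (extZeroDiv 𝕜 n i) = 0) ∧
    n ≤ extZcl 𝕜 n := by
  have hker : ∀ i : Fin n, extMul 𝕜 n (extZeroDiv 𝕜 n i) = 0 := by
    intro i
    rw [extZeroDiv, extMul]
    simp only [LinearMap.coe_comp, LinearEquiv.coe_coe, Function.comp_apply,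
      GradedTensorProduct.of_symm_of, map_sub, LinearMap.mul'_apply, one_mul, mul_one, sub_self]
  have hne := ZclAux.prod_ne_zero (𝕜 := 𝕜) (n := n)
  refine ⟨hne, hker, ?_⟩
  set S := {m : ℕ | ∃ l : List (extTensorSquare 𝕜 n), l.length = m ∧
    (∀ x ∈ l, extMul 𝕜 n x = 0) ∧ l.prod ≠ 0} with hS
  have hmem : n ∈ S := by
    refine ⟨List.ofFn fun i : Fin n => extZeroDiv 𝕜 n i, by simp, ?_, hne⟩
    intro x hx
    rw [List.mem_ofFn] at hx
    obtain ⟨i, rfl⟩ := hx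
    exact hker i
  have hbdd : BddAbove S := by
    refine ⟨2 * n, fun m hm => ?_⟩
    obtain ⟨l, hlen, hk, hp⟩ := hm
    by_contra hlt
    push_neg at hlt
    have h1 : l.prod ∈ ZclAux.W 𝕜 n l.length :=
      ZclAux.list_prod_mem_W l fun x hx => ZclAux.ker_le_W1 (hk x hx)
    have h2 : l.prod ∈ ZclAux.W 𝕜 n (2 * n + 1) :=
      ZclAux.W_antitone (by omega) h1
    rw [ZclAux.W_top, Submodule.mem_bot] at h2
    exact hp h2
  exact le_csSup hbdd hmem
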